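/- arXiv:2508.08871 — 10 statements merged into one kernel-verified Lean document; each statement's English description precedes it below -/
import Mathlib

section
/- For a framed weak f-structure (f, Q, ξ_1, …, ξ_s, η^1, …, η^s) on V one has f ξ_i = 0 and η^i ∘ f = 0 for every i = 1, …, s. -/
/-- For a framed weak f-structure `(f, Q, ξ_i, η^i)` on a real vector space `V` of
dimension `2n+s`, one has `f ξ_i = 0` and `η^i ∘ f = 0` for every `i`. -/
theorem framed_weak_f_structure_f_xi_eq_zero_and_eta_comp_f_eq_zero
    {V : Type*} [AddCommGroup V] [Module ℝ V] [FiniteDimensional ℝ V]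
    (n s : ℕ) (hn : 1 ≤ n) (hs : 1 ≤ s)
    (hdim : Module.finrank ℝ V = 2 * n + s)
    (f Q : V →ₗ[ℝ] V) (ξ : Fin s → V) (η : Fin s → V →ₗ[ℝ] ℝ)
    (hQ : Function.Bijective Q)
    (hrank : Module.finrank ℝ (LinearMap.range f) = 2 * n)
    (hf2 : ∀ X, f (f X) = -(Q X) + ∑ i, η i X • ξ i)
    (hηξ : ∀ i j, η i (ξ j) = if i = j then (1 : ℝ) else 0)
    (hQξ : ∀ i, Q (ξ i) = ξ i)
    (hD : ∀ X, (∀ i, η i X = 0) → ∀ i, η i (f X) = 0) :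
    (∀ i, f (ξ i) = 0) ∧ (∀ i X, η i (f X) = 0) := by
  classical
  -- Step 1: kernel elements are combinations of the ξ's with coefficients η^i(x).
  have hker : ∀ x : V, f x = 0 → x = ∑ i, η i x • ξ i := by
    intro x hx
    have h1 : f (f x) = -(Q x) + ∑ i, η i x • ξ i := hf2 x
    rw [hx, map_zero] at h1
    have h2 : Q x = ∑ i, η i x • ξ i := neg_add_eq_zero.mp h1.symm
    have h3 : Q (∑ i, η i x • ξ i) = ∑ i, η i x • ξ i := by
      rw [map_sum]
      simp [map_smul, hQξ]
    exact hQ.injective (h2.trans h3.symm)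
  -- Step 2: f² ξ_j = 0.
  have hf2ξ : ∀ j, f (f (ξ j)) = 0 := by
    intro j
    rw [hf2, hQξ]
    have : (∑ i, η i (ξ j) • ξ i) = ξ j := by
      simp only [hηξ]
      rw [Finset.sum_eq_single j] <;> simp +contextual [eq_comm]
    rw [this]; abel
  -- The distribution D.
  set D : Submodule ℝ V := ⨅ i, LinearMap.ker (η i) with hDdef
  have hmemD : ∀ x : V, x ∈ D ↔ ∀ i, η i x = 0 := by
    intro x; simp [hDdef, Submodule.mem_iInf, LinearMap.mem_ker]
  -- Step 3: finrank D = 2n.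
  have hdimD : Module.finrank ℝ D = 2 * n := by
    set π : V →ₗ[ℝ] (Fin s → ℝ) := LinearMap.pi η with hπ
    have hkerπ : LinearMap.ker π = D := by
      ext x
      simp [hπ, LinearMap.mem_ker, hmemD, funext_iff]
    have hsurj : LinearMap.range π = ⊤ := by
      rw [LinearMap.range_eq_top]
      intro c
      refine ⟨∑ j, c j • ξ j, ?_⟩
      funext i
      simp only [hπ, LinearMap.pi_apply, map_sum, map_smul, smul_eq_mul, hηξ]
      rw [Finset.sum_eq_single i] <;> simp +contextual [eq_comm]
    have := LinearMap.finrank_range_add_finrank_ker π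
    rw [hkerπ, hsurj, finrank_top, hdim] at this
    simp [Module.finrank_pi] at this
    omega
  -- Step 4: f is injective on D, so range f = f(D) ⊆ D.
  have hrangeD : LinearMap.range f ≤ D := by
    set g : D →ₗ[ℝ] V := f.domRestrict D with hg
    have hkerg : LinearMap.ker g = ⊥ := by
      rw [LinearMap.ker_eq_bot']
      rintro ⟨x, hxD⟩ hx
      have hfx : f x = 0 := hx
      have : x = ∑ i, η i x • ξ i := hker x hfx
      have hx0 : x = 0 := by
        rw [this]
        simp [(hmemD x).1 hxD]
      exact Subtype.ext hx0
    have hrg : Module.finrank ℝ (LinearMap.range g) = 2 * n := by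
      have := LinearMap.finrank_range_add_finrank_ker g
      rw [hkerg, hdimD] at this
      simpa using this
    have hle : LinearMap.range g ≤ LinearMap.range f := by
      rintro y ⟨⟨x, hx⟩, rfl⟩
      exact ⟨x, rfl⟩
    have heq : LinearMap.range g = LinearMap.range f :=
      Submodule.eq_of_le_of_finrank_eq hle (by rw [hrg, hrank])
    rw [← heq]
    rintro y ⟨⟨x, hx⟩, rfl⟩
    rw [hmemD]
    exact hD x ((hmemD x).1 hx)
  have hηf : ∀ i X, η i (f X) = 0 := by
    intro i X
    exact (hmemD (f X)).1 (hrangeD ⟨X, rfl⟩) i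
  refine ⟨?_, hηf⟩
  intro j
  have := hker (f (ξ j)) (hf2ξ j)
  rw [this]
  simp [hηf]
end

section
/- For a framed weak f-structure (f, Q, ξ_1, …, ξ_s, η^1, …, η^s) on V one has η^i ∘ Q = η^i for every i = 1, …, s, and Q commutes with f, i.e. Q ∘ f = f ∘ Q. -/
/-- For a framed weak f-structure `(f, Q, ξ_i, η^i)` on a real vector space `V` of
dimension `2n+s`, one has `η^i ∘ Q = η^i` for every `i`, and `Q` commutes with `f`. -/
theorem framed_weak_f_structure_eta_comp_Q_and_Q_comm_f
    {V : Type*} [AddCommGroup V] [Module ℝ V] [FiniteDimensional ℝ V]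
    (n s : ℕ) (hn : 1 ≤ n) (hs : 1 ≤ s)
    (hdim : Module.finrank ℝ V = 2 * n + s)
    (f Q : V →ₗ[ℝ] V) (ξ : Fin s → V) (η : Fin s → V →ₗ[ℝ] ℝ)
    (hQ : Function.Bijective Q)
    (hrank : Module.finrank ℝ (LinearMap.range f) = 2 * n)
    (hf2 : ∀ X, f (f X) = -(Q X) + ∑ i, η i X • ξ i)
    (hηξ : ∀ i j, η i (ξ j) = if i = j then (1 : ℝ) else 0)
    (hQξ : ∀ i, Q (ξ i) = ξ i)
    (hD : ∀ X, (∀ i, η i X = 0) → ∀ i, η i (f X) = 0) :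
    (∀ i X, η i (Q X) = η i X) ∧ (∀ X, Q (f X) = f (Q X)) := by
  classical
  set D := LinearMap.ker (LinearMap.pi η) with hDdef
  have hmemD : ∀ x : V, x ∈ D ↔ ∀ i, η i x = 0 := by
    intro x
    simp [hDdef, LinearMap.mem_ker, LinearMap.pi_apply, funext_iff]
  -- f is injective on D
  have hinj : ∀ x ∈ D, f x = 0 → x = 0 := by
    intro x hx hfx
    have h := hf2 x
    have hz : ∀ i, η i x = 0 := (hmemD x).mp hx
    rw [hfx, map_zero] at h
    simp only [hz, zero_smul, Finset.sum_const_zero, add_zero] at h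
    have hQx : Q x = 0 := by
      have := h.symm
      rwa [neg_eq_zero] at this
    exact hQ.injective (show Q x = Q 0 by simp [hQx])
  -- f maps D into D
  have hfD : ∀ x ∈ D, f x ∈ D := by
    intro x hx
    exact (hmemD (f x)).mpr (hD x ((hmemD x).mp hx))
  let g : D →ₗ[ℝ] D := f.restrict hfD
  have hginj : Function.Injective g := by
    intro a b hab
    have h1 : f (a : V) = f (b : V) := congrArg Subtype.val hab
    have h2 : f ((a : V) - (b : V)) = 0 := by rw [map_sub, h1, sub_self]
    have h3 : (a : V) - (b : V) ∈ D := sub_mem a.2 b.2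
    have := hinj _ h3 h2
    exact Subtype.ext (sub_eq_zero.mp this)
  have hgsurj : Function.Surjective g :=
    (LinearMap.injective_iff_surjective).mp hginj
  -- D ≤ range f
  have hle : D ≤ LinearMap.range f := by
    intro x hx
    obtain ⟨y, hy⟩ := hgsurj ⟨x, hx⟩
    exact ⟨(y : V), congrArg Subtype.val hy⟩
  -- finrank D ≥ 2n
  have h1 := LinearMap.finrank_range_add_finrank_ker (LinearMap.pi (R := ℝ) (φ := fun _ : Fin s => ℝ) η)
  have h2 : Module.finrank ℝ (LinearMap.range (LinearMap.pi (R := ℝ) (φ := fun _ : Fin s => ℝ) η)) ≤ s := by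
    have := Submodule.finrank_le (LinearMap.range (LinearMap.pi (R := ℝ) (φ := fun _ : Fin s => ℝ) η))
    simpa [Module.finrank_fin_fun] using this
  have hDge : 2 * n ≤ Module.finrank ℝ D := by
    rw [hdim] at h1
    rw [hDdef]
    omega
  have hDeq : D = LinearMap.range f :=
    Submodule.eq_of_le_of_finrank_le hle (by rw [hrank]; exact hDge)
  -- η ∘ f = 0
  have hηf : ∀ i X, η i (f X) = 0 := by
    intro i X
    have : f X ∈ D := hDeq ▸ LinearMap.mem_range_self f X
    exact (hmemD (f X)).mp this i
  -- sum formula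
  have hsum : ∀ j, (∑ i, η i (ξ j) • ξ i) = ξ j := by
    intro j
    have : (∑ i, η i (ξ j) • ξ i) = ∑ i, (if i = j then (1:ℝ) else 0) • ξ i := by
      refine Finset.sum_congr rfl fun i _ => by rw [hηξ]
    rw [this]
    simp [ite_smul, Finset.sum_ite_eq']
  -- f ξ = 0
  have hfξ : ∀ j, f (ξ j) = 0 := by
    intro j
    have hmem : f (ξ j) ∈ D := hDeq ▸ LinearMap.mem_range_self f (ξ j)
    apply hinj _ hmem
    rw [hf2, hQξ, hsum, neg_add_cancel]
  constructor
  · intro i X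
    have h := congrArg (η i) (hf2 X)
    rw [hηf i (f X)] at h
    have hsum2 : η i (∑ j, η j X • ξ j) = η i X := by
      rw [map_sum]
      have : ∀ j, η i (η j X • ξ j) = (if i = j then (1:ℝ) else 0) * η j X := by
        intro j; rw [map_smul, hηξ]; ring_nf
      simp only [this]
      simp [Finset.sum_ite_eq]
    rw [map_add, map_neg, hsum2] at h
    linarith
  · intro X
    have h := congrArg f (hf2 X)
    rw [map_add, map_neg, map_sum] at h
    simp only [map_smul, hfξ, smul_zero, Finset.sum_const_zero, add_zero] at h
    have h2 := hf2 (f X)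
    simp only [hηf, zero_smul, Finset.sum_const_zero, add_zero] at h2
    rw [h2] at h
    exact neg_injective h
end

section
/- For a framed weak f-structure (f, Q, ξ_1, …, ξ_s, η^1, …, η^s) on V the identity f³ + f ∘ Q = 0 holds. -/
/-- For a framed weak f-structure `(f, Q, ξ_i, η^i)` on a real vector space `V` of
dimension `2n+s`, the identity `f³ + f ∘ Q = 0` holds. -/
theorem framed_weak_f_structure_f_cubed_add_f_comp_Q_eq_zero
    {V : Type*} [AddCommGroup V] [Module ℝ V] [FiniteDimensional ℝ V]
    (n s : ℕ) (hn : 1 ≤ n) (hs : 1 ≤ s)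
    (hdim : Module.finrank ℝ V = 2 * n + s)
    (f Q : V →ₗ[ℝ] V) (ξ : Fin s → V) (η : Fin s → V →ₗ[ℝ] ℝ)
    (hQ : Function.Bijective Q)
    (hrank : Module.finrank ℝ (LinearMap.range f) = 2 * n)
    (hf2 : ∀ X, f (f X) = -(Q X) + ∑ i, η i X • ξ i)
    (hηξ : ∀ i j, η i (ξ j) = if i = j then (1 : ℝ) else 0)
    (hQξ : ∀ i, Q (ξ i) = ξ i)
    (hD : ∀ X, (∀ i, η i X = 0) → ∀ i, η i (f X) = 0) :
    ∀ X, f (f (f X)) + f (Q X) = 0 := by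
  -- ξ is linearly independent
  have hli : LinearIndependent ℝ ξ := by
    rw [Fintype.linearIndependent_iff]
    intro g hg j
    have := congrArg (η j) hg
    simp only [map_sum, map_smul, hηξ, map_zero, smul_eq_mul] at this
    simpa [Finset.sum_ite_eq', mul_comm] using this
  -- ker f ≤ span ξ
  have hker_le : LinearMap.ker f ≤ Submodule.span ℝ (Set.range ξ) := by
    intro X hX
    have hfX : f X = 0 := hX
    have h2 := hf2 X
    rw [hfX, map_zero] at h2
    have hQX : Q X = ∑ i, η i X • ξ i := by
      have := h2.symm
      rwa [neg_add_eq_zero] at this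
    have hX' : X = ∑ i, η i X • ξ i := by
      apply hQ.injective
      rw [hQX, map_sum]
      simp [hQξ]
    rw [hX']
    exact Submodule.sum_mem _ fun i _ =>
      Submodule.smul_mem _ _ (Submodule.subset_span ⟨i, rfl⟩)
  -- dimension count
  have hker_dim : Module.finrank ℝ (LinearMap.ker f) = s := by
    have := LinearMap.finrank_range_add_finrank_ker f
    omega
  have hspan_dim : Module.finrank ℝ (Submodule.span ℝ (Set.range ξ)) = s := by
    rw [finrank_span_eq_card hli, Fintype.card_fin]
  have hker_eq : LinearMap.ker f = Submodule.span ℝ (Set.range ξ) :=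
    Submodule.eq_of_le_of_finrank_le hker_le (by rw [hker_dim, hspan_dim])
  have hfξ : ∀ i, f (ξ i) = 0 := by
    intro i
    have : ξ i ∈ LinearMap.ker f := by
      rw [hker_eq]; exact Submodule.subset_span ⟨i, rfl⟩
    exact this
  intro X
  rw [hf2 X, map_add, map_neg, map_sum]
  simp [hfξ]
end

section
/- For a framed weak f-structure (f, Q, ξ_1, …, ξ_s, η^1, …, η^s) on V: the kernel of f equals the linear span of ξ_1, …, ξ_s, the image of f equals D = ∩_i ker η^i, and the restriction of f to D is injective. -/
/-- For a framed weak f-structure `(f, Q, ξ_i, η^i)` on a real vector space `V` of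
dimension `2n+s`: `ker f = span{ξ_1, …, ξ_s}`, `range f = D := ⋂_i ker η^i`,
and `f` restricted to `D` is injective. -/
theorem framed_weak_f_structure_ker_range_injOn
    {V : Type*} [AddCommGroup V] [Module ℝ V] [FiniteDimensional ℝ V]
    (n s : ℕ) (hn : 1 ≤ n) (hs : 1 ≤ s)
    (hdim : Module.finrank ℝ V = 2 * n + s)
    (f Q : V →ₗ[ℝ] V) (ξ : Fin s → V) (η : Fin s → V →ₗ[ℝ] ℝ)
    (hQ : Function.Bijective Q)
    (hrank : Module.finrank ℝ (LinearMap.range f) = 2 * n)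
    (hf2 : ∀ X, f (f X) = -(Q X) + ∑ i, η i X • ξ i)
    (hηξ : ∀ i j, η i (ξ j) = if i = j then (1 : ℝ) else 0)
    (hQξ : ∀ i, Q (ξ i) = ξ i)
    (hD : ∀ X, (∀ i, η i X = 0) → ∀ i, η i (f X) = 0) :
    LinearMap.ker f = Submodule.span ℝ (Set.range ξ) ∧
    LinearMap.range f = (⨅ i, LinearMap.ker (η i)) ∧
    (∀ X ∈ (⨅ i, LinearMap.ker (η i) : Submodule ℝ V),
      ∀ Y ∈ (⨅ i, LinearMap.ker (η i) : Submodule ℝ V), f X = f Y → X = Y) := by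
  classical
  set K : Submodule ℝ V := Submodule.span ℝ (Set.range ξ) with hK
  set D : Submodule ℝ V := ⨅ i, LinearMap.ker (η i) with hDdef
  -- membership in D
  have hmemD : ∀ x : V, x ∈ D ↔ ∀ i, η i x = 0 := by
    intro x
    simp [hDdef, Submodule.mem_iInf, LinearMap.mem_ker]
  -- η j of the "vertical part"
  have hηsum : ∀ (c : Fin s → ℝ) (j : Fin s), η j (∑ i, c i • ξ i) = c j := by
    intro c j
    rw [map_sum]
    simp only [map_smul, hηξ, smul_eq_mul]
    rw [Finset.sum_eq_single j]
    · simp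
    · intro i _ hij
      simp [if_neg (Ne.symm hij)]
    · simp
  -- ker f ≤ K
  have hker_le : LinearMap.ker f ≤ K := by
    intro x hx
    rw [LinearMap.mem_ker] at hx
    have h2 := hf2 x
    rw [hx, map_zero] at h2
    have hQx : Q x = ∑ i, η i x • ξ i := by linear_combination (norm := module) h2
    have hQsum : Q (∑ i, η i x • ξ i) = ∑ i, η i x • ξ i := by
      rw [map_sum]; simp [hQξ]
    have : x = ∑ i, η i x • ξ i := hQ.injective (by rw [hQx, hQsum])
    rw [this]
    exact Submodule.sum_mem _ fun i _ =>
      Submodule.smul_mem _ _ (Submodule.subset_span ⟨i, rfl⟩)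
  -- finrank of ker f
  have hkerdim : Module.finrank ℝ (LinearMap.ker f) = s := by
    have := LinearMap.finrank_range_add_finrank_ker f
    omega
  -- finrank K ≤ s
  have hKle : Module.finrank ℝ K ≤ s := by
    refine (finrank_span_le_card _).trans ?_
    simpa [Set.toFinset_range] using (Finset.card_image_le (s := Finset.univ) (f := ξ))
  -- ker f = K
  have hker : LinearMap.ker f = K :=
    Submodule.eq_of_le_of_finrank_le hker_le (hKle.trans hkerdim.ge)
  have hfξ : ∀ i, f (ξ i) = 0 := by
    intro i
    have : ξ i ∈ LinearMap.ker f := by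
      rw [hker]; exact Submodule.subset_span ⟨i, rfl⟩
    exact this
  -- K ⊓ D = ⊥
  have hKD : K ⊓ D = ⊥ := by
    rw [eq_bot_iff]
    rintro x ⟨hxK, hxD⟩
    obtain ⟨c, hc⟩ := (Submodule.mem_span_range_iff_exists_fun ℝ).mp hxK
    have hc0 : ∀ j, c j = 0 := by
      intro j
      have := (hmemD x).mp hxD j
      rw [← hc, hηsum] at this
      exact this
    have : x = 0 := by rw [← hc]; simp [hc0]
    simp [this]
  -- K ⊔ D = ⊤
  have hsup : K ⊔ D = ⊤ := by
    rw [eq_top_iff]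
    intro x _
    have hxd : x - ∑ i, η i x • ξ i ∈ D := by
      rw [hmemD]
      intro j
      rw [map_sub, hηsum]
      ring
    have hxk : (∑ i, η i x • ξ i) ∈ K :=
      Submodule.sum_mem _ fun i _ =>
        Submodule.smul_mem _ _ (Submodule.subset_span ⟨i, rfl⟩)
    have : x = (∑ i, η i x • ξ i) + (x - ∑ i, η i x • ξ i) := by abel
    rw [this]
    exact Submodule.add_mem _ (Submodule.mem_sup_left hxk) (Submodule.mem_sup_right hxd)
  -- finrank D = 2n
  have hKdim : Module.finrank ℝ K = s := by rw [← hker, hkerdim]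
  have hDdim : Module.finrank ℝ D = 2 * n := by
    have h := Submodule.finrank_sup_add_finrank_inf_eq K D
    rw [hsup, hKD, hKdim] at h
    simp only [finrank_top, finrank_bot, hdim] at h
    omega
  -- range f ≤ D
  have hrange_le : LinearMap.range f ≤ D := by
    rintro _ ⟨x, rfl⟩
    have hxd : ∀ j, η j (x - ∑ i, η i x • ξ i) = 0 := by
      intro j
      rw [map_sub, hηsum]
      ring
    have hfx : f x = f (x - ∑ i, η i x • ξ i) := by
      rw [map_sub, map_sum]
      simp [hfξ]
    rw [hmemD, hfx]
    exact hD _ hxd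
  have hrange : LinearMap.range f = D :=
    Submodule.eq_of_le_of_finrank_le hrange_le (by rw [hrank, hDdim])
  refine ⟨hker, hrange, ?_⟩
  intro X hX Y hY hf
  have h1 : X - Y ∈ K := hker ▸ LinearMap.mem_ker.mpr (by rw [map_sub, hf, sub_self])
  have hXY : X - Y ∈ K ⊓ D := Submodule.mem_inf.mpr ⟨h1, Submodule.sub_mem _ hX hY⟩
  rw [hKD] at hXY
  have h0 : X - Y = 0 := hXY
  exact sub_eq_zero.mp h0
end

section
/- For a weak metric f-structure (f, Q, ξ_1, …, ξ_s, η^1, …, η^s, ⟨·,·⟩) on V one has η^i(X) = ⟨X, ξ_i⟩ for all X ∈ V and all i = 1, …, s; consequently ξ_1, …, ξ_s form an orthonormal system, each ξ_i is orthogonal to D = ∩_i ker η^i, and V is the orthogonal direct sum of D and span{ξ_1, …, ξ_s}. -/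
open scoped RealInnerProductSpace

/-- For a weak metric f-structure `(f, Q, ξ_i, η^i, g)` on a real inner product space `V`
of dimension `2n+s`: `η^i(X) = ⟨X, ξ_i⟩`, the `ξ_i` are orthonormal, each `ξ_i` is
orthogonal to `D = ⋂_i ker η^i`, and `V` is the orthogonal direct sum of `D`
and `span{ξ_1, …, ξ_s}`. -/
theorem weak_metric_f_structure_eta_eq_inner_and_orthogonal_splitting
    {V : Type*} [NormedAddCommGroup V] [InnerProductSpace ℝ V] [FiniteDimensional ℝ V]
    (n s : ℕ) (hn : 1 ≤ n) (hs : 1 ≤ s)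
    (hdim : Module.finrank ℝ V = 2 * n + s)
    (f Q : V →ₗ[ℝ] V) (ξ : Fin s → V) (η : Fin s → V →ₗ[ℝ] ℝ)
    (hQ : Function.Bijective Q)
    (hrank : Module.finrank ℝ (LinearMap.range f) = 2 * n)
    (hf2 : ∀ X, f (f X) = -(Q X) + ∑ i, η i X • ξ i)
    (hηξ : ∀ i j, η i (ξ j) = if i = j then (1 : ℝ) else 0)
    (hQξ : ∀ i, Q (ξ i) = ξ i)
    (hD : ∀ X, (∀ i, η i X = 0) → ∀ i, η i (f X) = 0)
    (hmetric : ∀ X Y, ⟪f X, f Y⟫ = ⟪X, Q Y⟫ - ∑ i, η i X * η i Y) :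
    (∀ i X, η i X = ⟪X, ξ i⟫) ∧
    (∀ i j, ⟪ξ i, ξ j⟫ = if i = j then (1 : ℝ) else 0) ∧
    (∀ X ∈ (⨅ i, LinearMap.ker (η i) : Submodule ℝ V), ∀ i, ⟪X, ξ i⟫ = 0) ∧
    ((⨅ i, LinearMap.ker (η i) : Submodule ℝ V) ⊔ Submodule.span ℝ (Set.range ξ) = ⊤) ∧
    (∀ X ∈ (⨅ i, LinearMap.ker (η i) : Submodule ℝ V),
      ∀ Y ∈ Submodule.span ℝ (Set.range ξ), ⟪X, Y⟫ = 0) := by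

  classical
  -- η applied to a linear combination of the ξ's
  have hsum : ∀ (c : Fin s → ℝ) (k : Fin s), η k (∑ i, c i • ξ i) = c k := by
    intro c k
    rw [map_sum]
    simp only [map_smul, hηξ, smul_eq_mul, mul_ite, mul_one, mul_zero]
    simp [Finset.sum_ite_eq]
  -- Σ δ_{ij} • ξ i = ξ j
  have hdelta : ∀ j : Fin s, (∑ i, (if i = j then (1:ℝ) else 0) • ξ i) = ξ j := by
    intro j
    simp [ite_smul, Finset.sum_ite_eq']
  -- f² ξ_j = 0
  have hffξ : ∀ j, f (f (ξ j)) = 0 := by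
    intro j
    rw [hf2]
    simp only [hηξ]
    rw [hdelta, hQξ]
    abel
  -- intersection of ker f and D is trivial
  have hkerD : ∀ X : V, f X = 0 → (∀ i, η i X = 0) → X = 0 := by
    intro X hfX hηX
    have h := hf2 X
    rw [hfX, map_zero] at h
    have hQX : Q X = 0 := by
      simp only [hηX, zero_smul, Finset.sum_const_zero, add_zero] at h
      exact neg_eq_zero.mp h.symm
    exact hQ.injective (by rw [hQX, map_zero])
  -- each f ξ_j lies in span ξ, indeed f ξ_j = Σ η_i(fξ_j) • ξ_i
  have hu : ∀ j, f (ξ j) = ∑ i, η i (f (ξ j)) • ξ i := by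
    intro j
    have h := hf2 (f (ξ j))
    rw [hffξ j, map_zero] at h
    have hQu : Q (f (ξ j)) = ∑ i, η i (f (ξ j)) • ξ i := by
      have h2 := h.symm
      rw [neg_add_eq_sub, sub_eq_zero] at h2
      exact h2.symm
    have hQc : Q (∑ i, η i (f (ξ j)) • ξ i) = ∑ i, η i (f (ξ j)) • ξ i := by
      rw [map_sum]; simp [hQξ]
    exact hQ.injective (by rw [hQu, hQc])
  set S : Submodule ℝ V := Submodule.span ℝ (Set.range ξ) with hS
  have hmemS : ∀ (c : Fin s → ℝ), (∑ i, c i • ξ i) ∈ S := by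
    intro c
    exact Submodule.sum_mem _ fun i _ =>
      Submodule.smul_mem _ _ (Submodule.subset_span ⟨i, rfl⟩)
  -- every element of the span is the canonical combination
  have hrep : ∀ v ∈ S, v = ∑ i, η i v • ξ i := by
    intro v hv
    obtain ⟨c, hc⟩ := (Submodule.mem_span_range_iff_exists_fun ℝ).mp hv
    rw [← hc]
    refine (Finset.sum_congr rfl fun i _ => ?_).symm
    rw [hsum]
  -- ker f ≤ span ξ
  have hker_le : LinearMap.ker f ≤ S := by
    intro X hX
    rw [LinearMap.mem_ker] at hX
    set X₀ := X - ∑ i, η i X • ξ i with hX₀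
    have hηX₀ : ∀ k, η k X₀ = 0 := by
      intro k
      rw [hX₀, map_sub, hsum, sub_self]
    have hfX₀ : f X₀ = -∑ i, η i X • f (ξ i) := by
      rw [hX₀, map_sub, hX, map_sum, zero_sub]
      simp [map_smul]
    have hfX₀S : f X₀ ∈ S := by
      rw [hfX₀]
      refine Submodule.neg_mem _ (Submodule.sum_mem _ fun i _ => Submodule.smul_mem _ _ ?_)
      rw [hu i]
      exact hmemS _
    have hηfX₀ : ∀ k, η k (f X₀) = 0 := hD X₀ hηX₀
    have hfX₀0 : f X₀ = 0 := by
      rw [hrep _ hfX₀S]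
      simp [hηfX₀]
    have : X₀ = 0 := hkerD X₀ hfX₀0 hηX₀
    have hXeq : X = ∑ i, η i X • ξ i := by
      rw [hX₀] at this
      exact sub_eq_zero.mp this
    rw [hXeq]
    exact hmemS _
  -- linear independence of the ξ's
  have hli : LinearIndependent ℝ ξ := by
    rw [Fintype.linearIndependent_iff]
    intro c hc k
    have := hsum c k
    rw [hc, map_zero] at this
    exact this.symm
  have hfinS : Module.finrank ℝ S = s := by
    rw [hS, finrank_span_eq_card hli, Fintype.card_fin]
  have hfinker : Module.finrank ℝ (LinearMap.ker f) = s := by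
    have h := LinearMap.finrank_range_add_finrank_ker f
    rw [hrank, hdim] at h
    omega
  have hkereq : LinearMap.ker f = S :=
    Submodule.eq_of_le_of_finrank_le hker_le (by rw [hfinS, hfinker])
  -- f ξ_j = 0
  have hfξ : ∀ j, f (ξ j) = 0 := by
    intro j
    have : ξ j ∈ LinearMap.ker f := by
      rw [hkereq]; exact Submodule.subset_span ⟨j, rfl⟩
    exact LinearMap.mem_ker.mp this
  -- η i X = ⟪X, ξ i⟫
  have hη_inner : ∀ i X, η i X = ⟪X, ξ i⟫ := by
    intro i X
    have h := hmetric X (ξ i)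
    rw [hfξ i, inner_zero_right, hQξ i] at h
    have hsum2 : (∑ j, η j X * η j (ξ i)) = η i X := by
      simp only [hηξ, mul_ite, mul_one, mul_zero]
      simp [Finset.sum_ite_eq']
    rw [hsum2] at h
    linarith
  refine ⟨hη_inner, ?_, ?_, ?_, ?_⟩
  · intro i j
    rw [← hη_inner j (ξ i), hηξ j i]
    simp [eq_comm]
  · intro X hX i
    rw [Submodule.mem_iInf] at hX
    rw [← hη_inner i X]
    exact LinearMap.mem_ker.mp (hX i)
  · rw [Submodule.eq_top_iff']
    intro X
    rw [Submodule.mem_sup]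
    refine ⟨X - ∑ i, η i X • ξ i, ?_, ∑ i, η i X • ξ i, hmemS _, by abel⟩
    rw [Submodule.mem_iInf]
    intro k
    rw [LinearMap.mem_ker, map_sub, hsum, sub_self]
  · intro X hX Y hY
    rw [Submodule.mem_iInf] at hX
    rw [hrep Y hY, inner_sum]
    refine Finset.sum_eq_zero fun i _ => ?_
    rw [real_inner_smul_right, ← hη_inner i X, LinearMap.mem_ker.mp (hX i), mul_zero]
end

section
/- For a weak metric f-structure (f, Q, ξ_1, …, ξ_s, η^1, …, η^s, ⟨·,·⟩) on V, the endomorphism f is skew-adjoint: ⟨fX, Y⟩ = −⟨X, fY⟩ for all X, Y ∈ V. -/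
open scoped RealInnerProductSpace

/-- For a weak metric f-structure `(f, Q, ξ_i, η^i, g)` on a real inner product space `V`
of dimension `2n+s`, the endomorphism `f` is skew-adjoint. -/
theorem weak_metric_f_structure_f_skew_adjoint
    {V : Type*} [NormedAddCommGroup V] [InnerProductSpace ℝ V] [FiniteDimensional ℝ V]
    (n s : ℕ) (hn : 1 ≤ n) (hs : 1 ≤ s)
    (hdim : Module.finrank ℝ V = 2 * n + s)
    (f Q : V →ₗ[ℝ] V) (ξ : Fin s → V) (η : Fin s → V →ₗ[ℝ] ℝ)
    (hQ : Function.Bijective Q)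
    (hrank : Module.finrank ℝ (LinearMap.range f) = 2 * n)
    (hf2 : ∀ X, f (f X) = -(Q X) + ∑ i, η i X • ξ i)
    (hηξ : ∀ i j, η i (ξ j) = if i = j then (1 : ℝ) else 0)
    (hQξ : ∀ i, Q (ξ i) = ξ i)
    (hD : ∀ X, (∀ i, η i X = 0) → ∀ i, η i (f X) = 0)
    (hmetric : ∀ X Y, ⟪f X, f Y⟫ = ⟪X, Q Y⟫ - ∑ i, η i X * η i Y) :
    ∀ X Y, ⟪f X, Y⟫ = -⟪X, f Y⟫ := by
  classical
  -- injectivity of f on D = ⋂ ker η i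
  have hDinj : ∀ x : V, (∀ i, η i x = 0) → f x = 0 → x = 0 := by
    intro x hx hfx
    have h := hf2 x
    rw [hfx, map_zero] at h
    have hsum : (∑ i, η i x • ξ i) = 0 :=
      Finset.sum_eq_zero fun i _ => by rw [hx i, zero_smul]
    rw [hsum, add_zero] at h
    exact hQ.1 (by rw [map_zero]; exact (neg_eq_zero.mp h.symm))
  -- the map π collecting the η's
  set π : V →ₗ[ℝ] (Fin s → ℝ) := LinearMap.pi η with hπ
  have hπ_apply : ∀ x i, π x i = η i x := fun x i => rfl
  have hπsurj : Function.Surjective π := by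
    intro c
    refine ⟨∑ j, c j • ξ j, ?_⟩
    funext i
    rw [hπ_apply, map_sum]
    simp only [map_smul, smul_eq_mul, hηξ]
    simp [Finset.sum_ite_eq']
  have hmemker : ∀ x : V, x ∈ LinearMap.ker π ↔ ∀ i, η i x = 0 := by
    intro x
    rw [LinearMap.mem_ker, funext_iff]
    exact Iff.rfl
  have hkerdim : Module.finrank ℝ (LinearMap.ker π) = 2 * n := by
    have h1 := LinearMap.finrank_range_add_finrank_ker π
    have h2 : LinearMap.range π = ⊤ := LinearMap.range_eq_top.mpr hπsurj
    rw [h2, finrank_top, hdim] at h1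
    have h3 : Module.finrank ℝ (Fin s → ℝ) = s := by simp
    omega
  -- f maps D into D
  have hfD : Submodule.map f (LinearMap.ker π) ≤ LinearMap.ker π := by
    rintro y ⟨x, hx, rfl⟩
    exact (hmemker (f x)).mpr (hD x ((hmemker x).mp hx))
  -- the rank of f on D equals 2n, so range f = f(D) ⊆ D
  have hrangeD : LinearMap.range f ≤ LinearMap.ker π := by
    have hmaple : Submodule.map f (LinearMap.ker π) ≤ LinearMap.range f := by
      rintro y ⟨x, -, rfl⟩; exact ⟨x, rfl⟩
    have hker0 : LinearMap.ker (f.domRestrict (LinearMap.ker π)) = ⊥ := by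
      rw [LinearMap.ker_eq_bot']
      rintro ⟨x, hx⟩ hfx
      exact Subtype.ext (hDinj x ((hmemker x).mp hx) (by simpa using hfx))
    have hrg : LinearMap.range (f.domRestrict (LinearMap.ker π)) =
        Submodule.map f (LinearMap.ker π) := by
      ext y
      simp only [LinearMap.mem_range, Submodule.mem_map, LinearMap.domRestrict_apply]
      constructor
      · rintro ⟨⟨x, hx⟩, rfl⟩; exact ⟨x, hx, rfl⟩
      · rintro ⟨x, hx, rfl⟩; exact ⟨⟨x, hx⟩, rfl⟩
    have h1 := LinearMap.finrank_range_add_finrank_ker (f.domRestrict (LinearMap.ker π))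
    rw [hker0, finrank_bot, add_zero, hrg, hkerdim] at h1
    have heq : Submodule.map f (LinearMap.ker π) = LinearMap.range f :=
      Submodule.eq_of_le_of_finrank_le hmaple (by rw [hrank, h1])
    rw [← heq]
    exact hfD
  have hηf : ∀ (X : V) i, η i (f X) = 0 := by
    intro X i
    exact (hmemker (f X)).mp (hrangeD ⟨X, rfl⟩) i
  -- f ξ = 0
  have hfξ : ∀ j, f (ξ j) = 0 := by
    intro j
    refine hDinj _ (hηf (ξ j)) ?_
    have h := hf2 (ξ j)
    have hsum : (∑ i, η i (ξ j) • ξ i) = ξ j := by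
      simp [hηξ, ite_smul, Finset.sum_ite_eq']
    rw [hsum, hQξ j, neg_add_cancel] at h
    exact h
  -- η i X = ⟪X, ξ i⟫
  have hηinner : ∀ (X : V) j, η j X = ⟪X, ξ j⟫ := by
    intro X j
    have h := hmetric X (ξ j)
    rw [hfξ j, inner_zero_right, hQξ j] at h
    have hsum : (∑ i, η i X * η i (ξ j)) = η j X := by
      simp [hηξ, mul_ite, Finset.sum_ite_eq']
    rw [hsum] at h
    linarith
  -- f commutes with Q
  have hcomm : ∀ X, f (Q X) = Q (f X) := by
    intro X
    have h1 : f (f (f X)) = -(Q (f X)) := by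
      rw [hf2 (f X)]
      simp [hηf X]
    have h2 : f (f (f X)) = -(f (Q X)) := by
      conv_lhs => rw [hf2 X]
      rw [map_add, map_neg, map_sum]
      simp [hfξ]
    rw [h1] at h2
    exact (neg_injective h2).symm
  -- main computation
  intro X Z
  obtain ⟨Y, rfl⟩ := hQ.2 Z
  have h := hmetric X (f Y)
  rw [hf2 Y] at h
  have hsum0 : (∑ i, η i X * η i (f Y)) = 0 :=
    Finset.sum_eq_zero fun i _ => by rw [hηf Y i, mul_zero]
  rw [hsum0, sub_zero] at h
  have hL : ⟪f X, -(Q Y) + ∑ i, η i Y • ξ i⟫ = -⟪f X, Q Y⟫ := by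
    rw [inner_add_right, inner_neg_right, inner_sum]
    have : (∑ i, ⟪f X, η i Y • ξ i⟫) = 0 :=
      Finset.sum_eq_zero fun i _ => by
        rw [real_inner_smul_right, ← hηinner (f X) i, hηf X i, mul_zero]
    rw [this, add_zero]
  rw [hL] at h
  rw [← hcomm Y] at h
  linarith
end

section
/- Let V be a finite-dimensional real inner product space, h a self-adjoint endomorphism of V, and f an endomorphism of V with h ∘ f = −f ∘ h and ker f ⊆ ker h. Then the trace of h is zero. -/
open scoped RealInnerProductSpace

/-- Let `V` be a finite-dimensional real inner product space, `h` self-adjoint,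
`f` an endomorphism with `h ∘ f = -f ∘ h` and `ker f ⊆ ker h`. Then `tr h = 0`. -/
theorem self_adjoint_anticommuting_trace_eq_zero
    {V : Type*} [NormedAddCommGroup V] [InnerProductSpace ℝ V] [FiniteDimensional ℝ V]
    (h f : V →ₗ[ℝ] V)
    (hsa : ∀ X Y, ⟪h X, Y⟫ = ⟪X, h Y⟫)
    (hanti : ∀ X, h (f X) = -(f (h X)))
    (hker : LinearMap.ker f ≤ LinearMap.ker h) :
    LinearMap.trace ℝ V h = 0 := by
  classical
  have hS : (h : Module.End ℝ V).IsSymmetric := fun x y => hsa x y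
  set d : ℝ → ℕ := fun μ => Module.finrank ℝ (Module.End.eigenspace h μ) with hd
  -- `f` maps the eigenspace for `μ` injectively into the eigenspace for `-μ` (for `μ ≠ 0`).
  have dimle : ∀ μ : ℝ, μ ≠ 0 → d μ ≤ d (-μ) := by
    intro μ hμ
    have hmap : ∀ x ∈ Module.End.eigenspace h μ, f x ∈ Module.End.eigenspace h (-μ) := by
      intro x hx
      rw [Module.End.mem_eigenspace_iff] at hx ⊢
      rw [hanti, hx, map_smul, neg_smul]
    have hg : Function.Injective (f.restrict hmap) := by
      rw [← LinearMap.ker_eq_bot, eq_bot_iff]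
      rintro ⟨x, hx⟩ hx0
      have hfx : f x = 0 := by
        have := congrArg Subtype.val hx0
        simpa [LinearMap.restrict_apply] using this
      have hhx : h x = 0 := hker (LinearMap.mem_ker.mpr hfx)
      rw [Module.End.mem_eigenspace_iff] at hx
      have : μ • x = 0 := by rw [← hx, hhx]
      have hx0' : x = 0 := by
        rcases smul_eq_zero.mp this with h1 | h1
        · exact absurd h1 hμ
        · exact h1
      simp [Submodule.mem_bot, hx0']
    exact LinearMap.finrank_le_finrank_of_injective hg
  have dimeq : ∀ μ : ℝ, d μ = d (-μ) := by
    intro μ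
    rcases eq_or_ne μ 0 with rfl | hμ
    · rw [neg_zero]
    · exact le_antisymm (dimle μ hμ) (by simpa using dimle (-μ) (neg_ne_zero.mpr hμ))
  -- the eigenspaces give an internal direct sum decomposition
  have hint : DirectSum.IsInternal (fun μ : ℝ => Module.End.eigenspace h μ) :=
    DirectSum.isInternal_ne_bot_iff.mp hS.direct_sum_isInternal
  have hfin : {μ : ℝ | Module.End.eigenspace h μ ≠ ⊥}.Finite :=
    Module.End.finite_hasEigenvalue (h : Module.End ℝ V)
  have hmapsTo : ∀ μ : ℝ,
      Set.MapsTo h (Module.End.eigenspace h μ) (Module.End.eigenspace h μ) := by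
    intro μ x hx
    rw [SetLike.mem_coe, Module.End.mem_eigenspace_iff] at hx ⊢
    rw [hx, map_smul, hx]
  rw [LinearMap.trace_eq_sum_trace_restrict' hint hfin hmapsTo]
  have htr : ∀ μ : ℝ,
      LinearMap.trace ℝ (Module.End.eigenspace h μ) (h.restrict (hmapsTo μ)) = μ * d μ := by
    intro μ
    have : h.restrict (hmapsTo μ) = μ • LinearMap.id := by
      ext x
      have hx := Module.End.mem_eigenspace_iff.mp x.2
      simp [LinearMap.restrict_apply, hx]
      exact hx
    rw [this, map_smul, LinearMap.trace_id]
    simp [hd]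
  calc (∑ μ ∈ hfin.toFinset,
        LinearMap.trace ℝ (Module.End.eigenspace h μ) (h.restrict (hmapsTo μ)))
      = ∑ μ ∈ hfin.toFinset, μ * (d μ : ℝ) := by
        exact Finset.sum_congr rfl fun μ _ => htr μ
    _ = 0 := by
        apply Finset.sum_involution (g := fun μ _ => -μ)
        · intro a _
          rw [dimeq a]
          ring
        · intro a _ ha hcontr
          have ha0 : a = 0 := by linarith
          exact ha (by rw [ha0]; ring)
        · intro a _
          ring
        · intro a ha
          rw [Set.Finite.mem_toFinset] at ha ⊢
          intro hbot
          apply ha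
          have h0 : d (-a) = 0 := by rw [hd]; simp [hbot]
          rw [← dimeq a, hd] at h0
          exact Submodule.finrank_eq_zero.mp h0
end

section
/- With the above hypotheses, the endomorphism Q⁻¹h is self-adjoint, (Q⁻¹h)²X = X for all X ∈ D, and V decomposes as the orthogonal direct sum V = ker f ⊕ D⁺ ⊕ D⁻, where D⁺ and D⁻ are the eigenspaces of Q⁻¹h for the eigenvalues +1 and −1 respectively; moreover f(D⁺) ⊆ D⁻, f(D⁻) ⊆ D⁺, and dim D⁺ = dim D⁻ = n. -/
open scoped RealInnerProductSpace

set_option maxHeartbeats 2000000 in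
/-- Pointwise model of a weak almost S-manifold with `R_{X,Y}ξ_i = 0`: the operator
`A = Q⁻¹h` is self-adjoint, `A² = id` on `D`, and `V = ker f ⊕ D⁺ ⊕ D⁻` orthogonally,
where `D⁺ = ker (A - id)` and `D⁻ = ker (A + id)`; moreover `f(D⁺) ⊆ D⁻`,
`f(D⁻) ⊆ D⁺`, and `dim D⁺ = dim D⁻ = n`. -/
theorem weak_almost_S_nullity_eigenspace_decomposition
    {V : Type*} [NormedAddCommGroup V] [InnerProductSpace ℝ V] [FiniteDimensional ℝ V]
    (n s : ℕ) (hn : 1 ≤ n) (hs : 1 ≤ s)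
    (hdim : Module.finrank ℝ V = 2 * n + s)
    (f Q : V →ₗ[ℝ] V) (ξ : Fin s → V) (η : Fin s → V →ₗ[ℝ] ℝ)
    (hQ : Function.Bijective Q)
    (hrank : Module.finrank ℝ (LinearMap.range f) = 2 * n)
    (hf2 : ∀ X, f (f X) = -(Q X) + ∑ i, η i X • ξ i)
    (hηξ : ∀ i j, η i (ξ j) = if i = j then (1 : ℝ) else 0)
    (hQξ : ∀ i, Q (ξ i) = ξ i)
    (hDf : ∀ X, (∀ i, η i X = 0) → ∀ i, η i (f X) = 0)
    (hmetric : ∀ X Y, ⟪f X, f Y⟫ = ⟪X, Q Y⟫ - ∑ i, η i X * η i Y)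
    (h : V →ₗ[ℝ] V)
    (hhsa : ∀ X Y, ⟪h X, Y⟫ = ⟪X, h Y⟫)
    (hhξ : ∀ i, h (ξ i) = 0)
    (hhQ : ∀ X, h (Q X) = Q (h X))
    (hhf : ∀ X, h (f X) = -(f (h X)))
    (hh2 : ∀ X ∈ (⨅ i, LinearMap.ker (η i) : Submodule ℝ V), h (h X) = Q (Q X))
    (A : V →ₗ[ℝ] V) (hA : Q ∘ₗ A = h) :
    (∀ X Y, ⟪A X, Y⟫ = ⟪X, A Y⟫) ∧
    (∀ X ∈ (⨅ i, LinearMap.ker (η i) : Submodule ℝ V), A (A X) = X) ∧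
    (LinearMap.ker f ⊔ LinearMap.ker (A - LinearMap.id) ⊔ LinearMap.ker (A + LinearMap.id) = ⊤) ∧
    (∀ X ∈ LinearMap.ker f, ∀ Y ∈ LinearMap.ker (A - LinearMap.id), ⟪X, Y⟫ = 0) ∧
    (∀ X ∈ LinearMap.ker f, ∀ Y ∈ LinearMap.ker (A + LinearMap.id), ⟪X, Y⟫ = 0) ∧
    (∀ X ∈ LinearMap.ker (A - LinearMap.id), ∀ Y ∈ LinearMap.ker (A + LinearMap.id),
      ⟪X, Y⟫ = 0) ∧
    (∀ X ∈ LinearMap.ker (A - LinearMap.id), f X ∈ LinearMap.ker (A + LinearMap.id)) ∧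
    (∀ X ∈ LinearMap.ker (A + LinearMap.id), f X ∈ LinearMap.ker (A - LinearMap.id)) ∧
    Module.finrank ℝ (LinearMap.ker (A - LinearMap.id)) = n ∧
    Module.finrank ℝ (LinearMap.ker (A + LinearMap.id)) = n := by
  set D : Submodule ℝ V := ⨅ i, LinearMap.ker (η i) with hDdef
  have memD : ∀ X : V, X ∈ D ↔ ∀ i, η i X = 0 := by
    intro X
    simp [hDdef, Submodule.mem_iInf, LinearMap.mem_ker]
  have hQi : Function.Injective Q := hQ.1
  have hAQ : ∀ X, Q (A X) = h X := fun X => DFunLike.congr_fun hA X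
  have Qsa : ∀ X Y : V, ⟪Q X, Y⟫ = ⟪X, Q Y⟫ := by
    intro X Y
    have h1 := hmetric X Y
    have h2 := hmetric Y X
    have hS : ∑ i, η i X * η i Y = ∑ i, η i Y * η i X :=
      Finset.sum_congr rfl fun i _ => mul_comm _ _
    have hc1 : ⟪f X, f Y⟫ = ⟪f Y, f X⟫ := real_inner_comm _ _
    have hc2 : ⟪Q X, Y⟫ = ⟪Y, Q X⟫ := real_inner_comm _ _
    linarith
  have AQ : ∀ X, A (Q X) = Q (A X) := by
    intro X; apply hQi
    rw [hAQ, hhQ, ← hAQ]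
  have Asa : ∀ X Y : V, ⟪A X, Y⟫ = ⟪X, A Y⟫ := by
    intro X Y
    obtain ⟨Z, rfl⟩ := hQ.2 Y
    calc ⟪A X, Q Z⟫ = ⟪Q (A X), Z⟫ := (Qsa _ _).symm
      _ = ⟪h X, Z⟫ := by rw [hAQ]
      _ = ⟪X, h Z⟫ := hhsa _ _
      _ = ⟪X, Q (A Z)⟫ := by rw [hAQ]
      _ = ⟪X, A (Q Z)⟫ := by rw [AQ]
  have A2 : ∀ X ∈ D, A (A X) = X := by
    intro X hX
    apply hQi; apply hQi
    calc Q (Q (A (A X))) = Q (h (A X)) := by rw [hAQ]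
      _ = h (Q (A X)) := (hhQ _).symm
      _ = h (h X) := by rw [hAQ]
      _ = Q (Q X) := hh2 X hX
  have Aξ : ∀ i, A (ξ i) = 0 := by
    intro i; apply hQi
    rw [hAQ, hhξ, map_zero]
  have kerf_rep : ∀ X : V, f X = 0 → X = ∑ i, η i X • ξ i := by
    intro X hX
    have h2 := hf2 X
    rw [hX, map_zero] at h2
    have hQX : Q X = ∑ i, η i X • ξ i := neg_add_eq_zero.mp h2.symm
    apply hQi
    rw [hQX, map_sum]
    simp only [map_smul, hQξ]
  have hli : LinearIndependent ℝ ξ := by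
    rw [Fintype.linearIndependent_iff]
    intro g hg j
    have h2 := congrArg (η j) hg
    simpa [hηξ, eq_comm, Finset.sum_ite_eq] using h2
  have hker_dim : Module.finrank ℝ (LinearMap.ker f) = s := by
    have h2 := LinearMap.finrank_range_add_finrank_ker f
    rw [hrank, hdim] at h2; omega
  have hker_le : LinearMap.ker f ≤ Submodule.span ℝ (Set.range ξ) := by
    intro X hX
    rw [LinearMap.mem_ker] at hX
    rw [kerf_rep X hX]
    exact Submodule.sum_mem _ fun i _ =>
      Submodule.smul_mem _ _ (Submodule.subset_span ⟨i, rfl⟩)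
  have hker_eq : LinearMap.ker f = Submodule.span ℝ (Set.range ξ) := by
    refine Submodule.eq_of_le_of_finrank_le hker_le ?_
    rw [hker_dim, finrank_span_eq_card hli, Fintype.card_fin]
  have fξ : ∀ i, f (ξ i) = 0 := by
    intro i
    have h2 : ξ i ∈ LinearMap.ker f := by
      rw [hker_eq]; exact Submodule.subset_span ⟨i, rfl⟩
    exact LinearMap.mem_ker.mp h2
  have ηinner : ∀ (i) (X : V), η i X = ⟪X, ξ i⟫ := by
    intro i X
    have hm := hmetric X (ξ i)
    rw [fξ i, inner_zero_right, hQξ] at hm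
    have hsum : ∑ j, η j X * η j (ξ i) = η i X := by
      simp [hηξ, mul_ite, Finset.sum_ite_eq']
    rw [hsum] at hm
    linarith
  have Xd_mem : ∀ X : V, ∀ i, η i (X - ∑ j, η j X • ξ j) = 0 := by
    intro X i
    simp [hηξ, mul_ite, Finset.sum_ite_eq]
  have kermem : ∀ X : V, (∑ j, η j X • ξ j) ∈ LinearMap.ker f := by
    intro X
    rw [LinearMap.mem_ker, map_sum]
    simp [fξ]
  have ηf : ∀ (X : V) (i), η i (f X) = 0 := by
    intro X i
    have h1 : f X = f (X - ∑ j, η j X • ξ j) := by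
      rw [map_sub, LinearMap.mem_ker.mp (kermem X), sub_zero]
    rw [h1]
    exact hDf _ (Xd_mem X) i
  have fQ : ∀ X, f (Q X) = Q (f X) := by
    intro X
    have h1 : Q X = -(f (f X)) + ∑ i, η i X • ξ i := by
      rw [hf2 X]; abel
    have h2 : f (f (f X)) = -(Q (f X)) := by
      rw [hf2 (f X)]; simp [ηf]
    rw [h1, map_add, map_neg, map_sum]
    simp only [map_smul, fξ, smul_zero, Finset.sum_const_zero, add_zero]
    rw [h2, neg_neg]
  have memP : ∀ X : V, X ∈ LinearMap.ker (A - LinearMap.id) ↔ A X = X := by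
    intro X
    rw [LinearMap.mem_ker, LinearMap.sub_apply, LinearMap.id_apply, sub_eq_zero]
  have memM : ∀ X : V, X ∈ LinearMap.ker (A + LinearMap.id) ↔ A X = -X := by
    intro X
    rw [LinearMap.mem_ker, LinearMap.add_apply, LinearMap.id_apply, add_eq_zero_iff_eq_neg]
  have fplus : ∀ X : V, A X = X → A (f X) = -(f X) := by
    intro X hX
    apply hQi
    calc Q (A (f X)) = h (f X) := hAQ _
      _ = -(f (h X)) := hhf X
      _ = -(f (Q (A X))) := by rw [hAQ]
      _ = -(f (Q X)) := by rw [hX]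
      _ = -(Q (f X)) := by rw [fQ]
      _ = Q (-(f X)) := (map_neg Q _).symm
  have fminus : ∀ X : V, A X = -X → A (f X) = f X := by
    intro X hX
    apply hQi
    calc Q (A (f X)) = h (f X) := hAQ _
      _ = -(f (h X)) := hhf X
      _ = -(f (Q (A X))) := by rw [hAQ]
      _ = -(f (Q (-X))) := by rw [hX]
      _ = -(-(f (Q X))) := by rw [map_neg, map_neg]
      _ = Q (f X) := by rw [neg_neg, fQ]
  have AD : ∀ X : V, A X ∈ D := by
    intro X
    rw [memD]
    intro i
    rw [ηinner, Asa, Aξ, inner_zero_right]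
  have PD : ∀ X ∈ LinearMap.ker (A - LinearMap.id), X ∈ D := by
    intro X hX
    rw [memP] at hX
    exact hX ▸ AD X
  have MD : ∀ X ∈ LinearMap.ker (A + LinearMap.id), X ∈ D := by
    intro X hX
    rw [memM] at hX
    have h2 : A X ∈ D := AD X
    rw [hX] at h2
    simpa using D.neg_mem h2
  have kerf_orth : ∀ X ∈ LinearMap.ker f, ∀ Y ∈ D, ⟪X, Y⟫ = 0 := by
    intro X hX Y hY
    rw [LinearMap.mem_ker] at hX
    rw [kerf_rep X hX, sum_inner]
    refine Finset.sum_eq_zero fun i _ => ?_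
    rw [real_inner_smul_left, real_inner_comm, ← ηinner, (memD Y).mp hY i, mul_zero]
  have PM_orth : ∀ X ∈ LinearMap.ker (A - LinearMap.id),
      ∀ Y ∈ LinearMap.ker (A + LinearMap.id), ⟪X, Y⟫ = 0 := by
    intro X hX Y hY
    rw [memP] at hX; rw [memM] at hY
    have h1 : ⟪X, Y⟫ = -⟪X, Y⟫ := by
      conv_lhs => rw [← hX]
      rw [Asa, hY, inner_neg_right]
    linarith
  have Pmem : ∀ X ∈ D, X + A X ∈ LinearMap.ker (A - LinearMap.id) := by
    intro X hX
    rw [memP, map_add, A2 X hX, add_comm]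
  have Mmem : ∀ X ∈ D, X - A X ∈ LinearMap.ker (A + LinearMap.id) := by
    intro X hX
    rw [memM, map_sub, A2 X hX, neg_sub]
  have hsup : LinearMap.ker f ⊔ LinearMap.ker (A - LinearMap.id)
      ⊔ LinearMap.ker (A + LinearMap.id) = ⊤ := by
    rw [eq_top_iff]
    intro X _
    have hXdD : X - ∑ j, η j X • ξ j ∈ D := (memD _).mpr (Xd_mem X)
    have hx : X = (∑ j, η j X • ξ j)
        + ((1/2 : ℝ) • ((X - ∑ j, η j X • ξ j) + A (X - ∑ j, η j X • ξ j))
        + (1/2 : ℝ) • ((X - ∑ j, η j X • ξ j) - A (X - ∑ j, η j X • ξ j))) := by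
      module
    rw [hx]
    refine Submodule.add_mem _ ?_ (Submodule.add_mem _ ?_ ?_)
    · exact Submodule.mem_sup_left (Submodule.mem_sup_left (kermem X))
    · exact Submodule.mem_sup_left (Submodule.mem_sup_right
        (Submodule.smul_mem _ _ (Pmem _ hXdD)))
    · exact Submodule.mem_sup_right (Submodule.smul_mem _ _ (Mmem _ hXdD))
  have hsupKD : LinearMap.ker f ⊔ D = ⊤ := by
    rw [eq_top_iff]
    intro X _
    have hx : X = (∑ j, η j X • ξ j) + (X - ∑ j, η j X • ξ j) := by abel
    rw [hx]
    exact Submodule.add_mem _ (Submodule.mem_sup_left (kermem X))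
      (Submodule.mem_sup_right ((memD _).mpr (Xd_mem X)))
  have hinfKD : LinearMap.ker f ⊓ D = ⊥ := by
    rw [eq_bot_iff]
    intro X hX
    rw [Submodule.mem_inf] at hX
    obtain ⟨hX1, hX2⟩ := hX
    have h2 := kerf_rep X (LinearMap.mem_ker.mp hX1)
    rw [memD] at hX2
    simp only [hX2, zero_smul, Finset.sum_const_zero] at h2
    simp [h2]
  have hD_dim : Module.finrank ℝ D = 2 * n := by
    have h1 := Submodule.finrank_sup_add_finrank_inf_eq (LinearMap.ker f) D
    rw [hsupKD, hinfKD, hker_dim] at h1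
    rw [finrank_top, hdim, finrank_bot] at h1
    omega
  have hPMD : LinearMap.ker (A - LinearMap.id) ⊔ LinearMap.ker (A + LinearMap.id) = D := by
    apply le_antisymm
    · exact sup_le PD MD
    · intro X hX
      have hx : X = (1/2 : ℝ) • (X + A X) + (1/2 : ℝ) • (X - A X) := by module
      rw [hx]
      exact Submodule.add_mem _
        (Submodule.mem_sup_left (Submodule.smul_mem _ _ (Pmem X hX)))
        (Submodule.mem_sup_right (Submodule.smul_mem _ _ (Mmem X hX)))
  have hinfPM : LinearMap.ker (A - LinearMap.id) ⊓ LinearMap.ker (A + LinearMap.id) = ⊥ := by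
    rw [eq_bot_iff]
    intro X hX
    rw [Submodule.mem_inf] at hX
    obtain ⟨h1, h2⟩ := hX
    rw [memP] at h1; rw [memM] at h2
    have hx : X = -X := h1.symm.trans h2
    have h3 : (2 : ℝ) • X = 0 := by
      rw [two_smul]
      nth_rewrite 2 [hx]
      simp
    rcases smul_eq_zero.mp h3 with h4 | h4
    · norm_num at h4
    · simp [h4]
  have hsumPM : Module.finrank ℝ (LinearMap.ker (A - LinearMap.id))
      + Module.finrank ℝ (LinearMap.ker (A + LinearMap.id)) = 2 * n := by
    have h1 := Submodule.finrank_sup_add_finrank_inf_eq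
      (LinearMap.ker (A - LinearMap.id)) (LinearMap.ker (A + LinearMap.id))
    rw [hPMD, hinfPM, hD_dim, finrank_bot] at h1
    omega
  have finj : ∀ X ∈ D, f X = 0 → X = 0 := by
    intro X hX hfX
    have h2 := kerf_rep X hfX
    rw [memD] at hX
    simpa [hX] using h2
  have fPM : ∀ X ∈ LinearMap.ker (A - LinearMap.id),
      f X ∈ LinearMap.ker (A + LinearMap.id) := by
    intro X hX
    rw [memM]
    exact fplus X ((memP X).mp hX)
  have fMP : ∀ X ∈ LinearMap.ker (A + LinearMap.id),
      f X ∈ LinearMap.ker (A - LinearMap.id) := by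
    intro X hX
    rw [memP]
    exact fminus X ((memM X).mp hX)
  have hle1 : Module.finrank ℝ (LinearMap.ker (A - LinearMap.id))
      ≤ Module.finrank ℝ (LinearMap.ker (A + LinearMap.id)) := by
    have hinj : Function.Injective (f.restrict fPM) := by
      rw [← LinearMap.ker_eq_bot, eq_bot_iff]
      intro x hx
      have h0 : f (x : V) = 0 := by
        have h5 : ((f.restrict fPM) x : V) = 0 :=
          congrArg Subtype.val (LinearMap.mem_ker.mp hx)
        exact h5
      have h6 := finj x (PD x x.2) h0
      exact (Submodule.mem_bot ℝ).mpr (Subtype.ext h6)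
    exact LinearMap.finrank_le_finrank_of_injective hinj
  have hle2 : Module.finrank ℝ (LinearMap.ker (A + LinearMap.id))
      ≤ Module.finrank ℝ (LinearMap.ker (A - LinearMap.id)) := by
    have hinj : Function.Injective (f.restrict fMP) := by
      rw [← LinearMap.ker_eq_bot, eq_bot_iff]
      intro x hx
      have h0 : f (x : V) = 0 := by
        have h5 : ((f.restrict fMP) x : V) = 0 :=
          congrArg Subtype.val (LinearMap.mem_ker.mp hx)
        exact h5
      have h6 := finj x (MD x x.2) h0
      exact (Submodule.mem_bot ℝ).mpr (Subtype.ext h6)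
    exact LinearMap.finrank_le_finrank_of_injective hinj
  refine ⟨Asa, A2, hsup, ?_, ?_, PM_orth, fPM, fMP, by omega, by omega⟩
  · exact fun X hX Y hY => kerf_orth X hX Y (PD Y hY)
  · exact fun X hX Y hY => kerf_orth X hX Y (MD Y hY)
end

section
/- With the above hypotheses (the pointwise relations h_j h_i X = (1−κ)Q²X for X ∈ D coming from the (κ,μ)-nullity condition, with κ < 1), the endomorphisms all coincide: h_1 = h_2 = … = h_s. -/
open scoped RealInnerProductSpace

/-- Pointwise form of the (κ,μ)-nullity relations `h_j h_i = (1-κ)Q²` on `D` with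
`κ < 1`: all the operators coincide, `h_1 = … = h_s`. -/
theorem weak_f_kappa_mu_h_tensors_coincide
    {V : Type*} [NormedAddCommGroup V] [InnerProductSpace ℝ V] [FiniteDimensional ℝ V]
    (n s : ℕ) (hn : 1 ≤ n) (hs : 1 ≤ s)
    (hdim : Module.finrank ℝ V = 2 * n + s)
    (f Q : V →ₗ[ℝ] V) (ξ : Fin s → V) (η : Fin s → V →ₗ[ℝ] ℝ)
    (hQ : Function.Bijective Q)
    (hrank : Module.finrank ℝ (LinearMap.range f) = 2 * n)
    (hf2 : ∀ X, f (f X) = -(Q X) + ∑ i, η i X • ξ i)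
    (hηξ : ∀ i j, η i (ξ j) = if i = j then (1 : ℝ) else 0)
    (hQξ : ∀ i, Q (ξ i) = ξ i)
    (hDf : ∀ X, (∀ i, η i X = 0) → ∀ i, η i (f X) = 0)
    (hmetric : ∀ X Y, ⟪f X, f Y⟫ = ⟪X, Q Y⟫ - ∑ i, η i X * η i Y)
    (κ : ℝ) (hκ : κ < 1) (h : Fin s → V →ₗ[ℝ] V)
    (hhsa : ∀ i, ∀ X Y, ⟪h i X, Y⟫ = ⟪X, h i Y⟫)
    (hhξ : ∀ i j, h i (ξ j) = 0)
    (hhQ : ∀ i, ∀ X, h i (Q X) = Q (h i X))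
    (hh2 : ∀ i j, ∀ X ∈ (⨅ i, LinearMap.ker (η i) : Submodule ℝ V),
      h j (h i X) = (1 - κ) • Q (Q X)) :
    ∀ i j, h i = h j := by
  intro i j
  ext X
  set Y : V := X - ∑ k, η k X • ξ k with hYdef
  have hYker : ∀ k, η k Y = 0 := by
    intro k
    simp [hYdef, map_sum, map_smul, hηξ, Finset.sum_ite_eq, eq_comm]
  have hYmem : Y ∈ (⨅ i, LinearMap.ker (η i) : Submodule ℝ V) := by
    simp only [Submodule.mem_iInf, LinearMap.mem_ker]
    exact hYker
  have hhXY : ∀ a, h a X = h a Y := by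
    intro a
    simp [hYdef, map_sub, map_sum, map_smul, hhξ]
  set Z : V := h i Y - h j Y with hZdef
  have hkey : h i Z - h j Z = 0 := by
    simp only [hZdef, map_sub]
    rw [hh2 i i Y hYmem, hh2 j i Y hYmem, hh2 i j Y hYmem, hh2 j j Y hYmem]
    abel
  have hZZ : ⟪Z, Z⟫ = 0 := by
    have : ⟪Z, Z⟫ = ⟪Y, h i Z - h j Z⟫ := by
      nth_rewrite 1 [hZdef]
      rw [inner_sub_left, hhsa, hhsa, ← inner_sub_right]
    rw [this, hkey, inner_zero_right]
  have hZ0 : Z = 0 := by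
    exact inner_self_eq_zero.mp hZZ
  have : h i Y = h j Y := by
    have := sub_eq_zero.mp hZ0
    exact this
  rw [hhXY i, hhXY j, this]
end

section
/- For a weak metric f-structure (f, Q, ξ_1, …, ξ_s, η^1, …, η^s, ⟨·,·⟩) on V with n = 1 (so dim V = 2+s and dim D = 2), there exists a real number β > 0 such that QX = β²X for all X ∈ D. -/
open scoped RealInnerProductSpace

/-- For a weak metric f-structure on `V` with `n = 1` (so `dim V = 2 + s` and
`dim D = 2`), there exists `β > 0` with `Q X = β² X` for all `X ∈ D`. -/
theorem weak_metric_f_structure_dim_two_Q_is_scalar_on_D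
    {V : Type*} [NormedAddCommGroup V] [InnerProductSpace ℝ V] [FiniteDimensional ℝ V]
    (s : ℕ) (hs : 1 ≤ s)
    (hdim : Module.finrank ℝ V = 2 + s)
    (f Q : V →ₗ[ℝ] V) (ξ : Fin s → V) (η : Fin s → V →ₗ[ℝ] ℝ)
    (hQ : Function.Bijective Q)
    (hrank : Module.finrank ℝ (LinearMap.range f) = 2)
    (hf2 : ∀ X, f (f X) = -(Q X) + ∑ i, η i X • ξ i)
    (hηξ : ∀ i j, η i (ξ j) = if i = j then (1 : ℝ) else 0)
    (hQξ : ∀ i, Q (ξ i) = ξ i)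
    (hDf : ∀ X, (∀ i, η i X = 0) → ∀ i, η i (f X) = 0)
    (hmetric : ∀ X Y, ⟪f X, f Y⟫ = ⟪X, Q Y⟫ - ∑ i, η i X * η i Y) :
    ∃ β : ℝ, 0 < β ∧
      ∀ X ∈ (⨅ i, LinearMap.ker (η i) : Submodule ℝ V), Q X = β ^ 2 • X := by
  set D : Submodule ℝ V := ⨅ i, LinearMap.ker (η i) with hDdef
  have hmemD : ∀ X : V, X ∈ D ↔ ∀ i, η i X = 0 := by
    intro X; simp [hDdef, Submodule.mem_iInf, LinearMap.mem_ker]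
  -- f²X = -QX on D
  have hf2D : ∀ X ∈ D, f (f X) = -(Q X) := by
    intro X hX
    have := hf2 X
    simp [(hmemD X).1 hX] at this
    simpa using this
  -- fX ∈ D for X ∈ D
  have hfD : ∀ X ∈ D, f X ∈ D := by
    intro X hX
    exact (hmemD _).2 (hDf X ((hmemD X).1 hX))
  -- metric on D
  have hmetD : ∀ X ∈ D, ∀ Y, ⟪f X, f Y⟫ = ⟪X, Q Y⟫ := by
    intro X hX Y
    have := hmetric X Y
    simp [(hmemD X).1 hX] at this
    exact this
  -- f injective on D
  have hfinj : ∀ X ∈ D, f X = 0 → X = 0 := by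
    intro X hX h0
    have h1 : f (f X) = 0 := by rw [h0]; simp
    rw [hf2D X hX] at h1
    exact hQ.injective (by simpa using neg_eq_zero.mp h1)
  -- QX ∈ D for X ∈ D
  have hQD : ∀ X ∈ D, Q X ∈ D := by
    intro X hX
    have : Q X = -(f (f X)) := by rw [hf2D X hX]; simp
    rw [this]
    exact D.neg_mem (hfD _ (hfD X hX))
  -- dim D ≤ 2
  have hdimD : Module.finrank ℝ D ≤ 2 := by
    rw [← hrank]
    have : Function.Injective
        ((f.domRestrict D).codRestrict (LinearMap.range f)
          (fun x => LinearMap.mem_range_self f (x : V))) := by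
      intro x y hxy
      have h : f (x : V) = f (y : V) := congrArg Subtype.val hxy
      have : f ((x : V) - (y : V)) = 0 := by
        rw [map_sub, h, sub_self]
      have hxy0 : (x : V) - (y : V) = 0 :=
        hfinj _ (D.sub_mem x.2 y.2) this
      exact Subtype.ext (sub_eq_zero.mp hxy0)
    exact LinearMap.finrank_le_finrank_of_injective this
  rcases eq_or_ne D ⊥ with hbot | hbot
  · refine ⟨1, one_pos, fun X hX => ?_⟩
    rw [hbot] at hX
    have hX0 : X = 0 := (Submodule.mem_bot ℝ).mp hX
    rw [hX0]; simp
  obtain ⟨X0, hX0D, hX0⟩ := Submodule.exists_mem_ne_zero_of_ne_bot hbot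
  have hfX0D := hfD X0 hX0D
  have hfX0 : f X0 ≠ 0 := fun h => hX0 (hfinj X0 hX0D h)
  set x := ⟪X0, X0⟫ with hxdef
  set y := ⟪f X0, f X0⟫ with hydef
  have hx : 0 < x := by
    rw [hxdef, real_inner_self_eq_norm_sq]
    exact pow_pos (norm_pos_iff.mpr hX0) 2
  have hy : 0 < y := by
    rw [hydef, real_inner_self_eq_norm_sq]
    exact pow_pos (norm_pos_iff.mpr hfX0) 2
  -- E1 : ⟪X0, Q X0⟫ = y
  have E1 : ⟪X0, Q X0⟫ = y := (hmetD X0 hX0D X0).symm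
  -- E2 : ⟪Q X0, f X0⟫ = 0
  have E2 : ⟪Q X0, f X0⟫ = 0 := by
    have h := hmetD (f X0) hfX0D X0
    rw [hf2D X0 hX0D] at h
    have hsymm : ⟪f X0, Q X0⟫ = ⟪Q X0, f X0⟫ := real_inner_comm _ _
    rw [hsymm] at h
    have : ⟪-(Q X0), f X0⟫ = -⟪Q X0, f X0⟫ := by rw [inner_neg_left]
    rw [this] at h
    linarith
  -- independence of X0, f X0
  have hindep : LinearIndependent ℝ ![X0, f X0] := by
    rw [LinearIndependent.pair_iff]
    intro a b hab
    have h1 : ⟪a • X0 + b • f X0, Q X0⟫ = 0 := by rw [hab]; simp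
    rw [inner_add_left, real_inner_smul_left, real_inner_smul_left] at h1
    have h2 : ⟪X0, Q X0⟫ = y := E1
    have h3 : ⟪f X0, Q X0⟫ = 0 := by rw [real_inner_comm]; exact E2
    rw [h2, h3] at h1
    have ha : a = 0 := by
      have := mul_eq_zero.mp (by linarith : a * y = 0)
      rcases this with h | h
      · exact h
      · exact absurd h (ne_of_gt hy)
    refine ⟨ha, ?_⟩
    rw [ha, zero_smul, zero_add] at hab
    by_contra hb
    exact hfX0 (by simpa [hb] using hab)
  -- span {X0, f X0} = D
  have hspan : Submodule.span ℝ {X0, f X0} = D := by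
    have hle : Submodule.span ℝ {X0, f X0} ≤ D := by
      rw [Submodule.span_le]
      intro z hz
      rcases hz with h | h
      · rw [h]; exact hX0D
      · rw [Set.mem_singleton_iff.mp h]; exact hfX0D
    refine Submodule.eq_of_le_of_finrank_le hle ?_
    have : Module.finrank ℝ (Submodule.span ℝ (Set.range ![X0, f X0])) = 2 := by
      rw [finrank_span_eq_card hindep]; simp
    have hr : Set.range ![X0, f X0] = {X0, f X0} := by
      simp [Matrix.range_cons, Matrix.range_empty, Set.pair_comm]
    rw [hr] at this
    rw [this]
    exact hdimD
  -- decompose Q X0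
  obtain ⟨a, b, hab⟩ := Submodule.mem_span_pair.mp (hspan ▸ hQD X0 hX0D)
  set p := ⟪X0, f X0⟫ with hpdef
  -- E2 expanded : a p + b y = 0
  have E2' : a * p + b * y = 0 := by
    have := E2
    rw [← hab, inner_add_left, real_inner_smul_left, real_inner_smul_left] at this
    linarith
  -- E4 : a p - b y = 0
  have E4 : a * p - b * y = 0 := by
    have hQf : Q (f X0) = f (Q X0) := by
      have h1 : f (f (f X0)) = -(Q (f X0)) := hf2D (f X0) hfX0D
      have h2 : f (f (f X0)) = f (-(Q X0)) := congrArg f (hf2D X0 hX0D)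
      rw [h2, map_neg] at h1
      exact neg_injective h1.symm
    have hmain := hmetD X0 hX0D (f X0)
    -- LHS: ⟪f X0, f (f X0)⟫ = ⟪f X0, -Q X0⟫ = 0
    rw [hf2D X0 hX0D] at hmain
    have hl : ⟪f X0, -(Q X0)⟫ = 0 := by
      rw [inner_neg_right, real_inner_comm]
      rw [E2]; ring
    rw [hl] at hmain
    -- RHS: ⟪X0, Q (f X0)⟫ = ⟪X0, f (Q X0)⟫ = a p + b ⟪X0, f (f X0)⟫ = a p - b y
    rw [hQf, ← hab, map_add, map_smul, map_smul] at hmain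
    rw [inner_add_right, real_inner_smul_right, real_inner_smul_right] at hmain
    rw [hf2D X0 hX0D, inner_neg_right] at hmain
    rw [E1] at hmain
    linarith
  have hb0 : b = 0 := by
    have : b * y = 0 := by linarith
    rcases mul_eq_zero.mp this with h | h
    · exact h
    · exact absurd h (ne_of_gt hy)
  have hQX0 : Q X0 = (y / x) • X0 := by
    have ha : a = y / x := by
      have h1 : ⟪X0, Q X0⟫ = a * x := by
        rw [← hab, hb0, zero_smul, add_zero, real_inner_smul_right]
      rw [E1] at h1
      field_simp
      linarith
    rw [← hab, hb0, zero_smul, add_zero, ha]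
  have hQfX0 : Q (f X0) = (y / x) • f X0 := by
    have hQf : Q (f X0) = f (Q X0) := by
      have h1 : f (f (f X0)) = -(Q (f X0)) := hf2D (f X0) hfX0D
      have h2 : f (f (f X0)) = f (-(Q X0)) := congrArg f (hf2D X0 hX0D)
      rw [h2, map_neg] at h1
      exact neg_injective h1.symm
    rw [hQf, hQX0, map_smul]
  refine ⟨Real.sqrt (y / x), Real.sqrt_pos.mpr (div_pos hy hx), ?_⟩
  intro X hX
  have hsq : Real.sqrt (y / x) ^ 2 = y / x :=
    Real.sq_sqrt (le_of_lt (div_pos hy hx))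
  rw [hsq]
  rw [← hspan] at hX
  obtain ⟨c, d, hcd⟩ := Submodule.mem_span_pair.mp hX
  rw [← hcd, map_add, map_smul, map_smul, hQX0, hQfX0]
  rw [smul_add, smul_smul, smul_smul, smul_smul, smul_smul]
  ring_nf
end
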